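/- Let p ∈ V and t ∈ Λ²V both be nonzero. Then p ∧ t = 0 in Λ³V if and only if there exist q, r ∈ V with t = q ∧ r and p ∈ span{q, r}. (Equivalently: p ∧ t = 0 forces t to be decomposable, with the point K·p on the line K·q + K·r represented by t.) -/

import Mathlib

open TensorProduct

variable (K V : Type*) [Field K] [AddCommGroup V] [Module K V]

/-- The wedge `q ∧ r` of two vectors, as an element of the second exterior power. -/
def wedge2 (q r : V) : ⋀[K]^2 V :=
  ⟨ExteriorAlgebra.ιMulti K 2 ![q, r],
    ExteriorAlgebra.ιMulti_range K 2 (Set.mem_range_self _)⟩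

/-- The wedge `p ∧ q ∧ r` of three vectors, as an element of the third exterior power. -/
def wedge3 (p q r : V) : ⋀[K]^3 V :=
  ⟨ExteriorAlgebra.ιMulti K 3 ![p, q, r],
    ExteriorAlgebra.ιMulti_range K 3 (Set.mem_range_self _)⟩

section Aux

open ExteriorAlgebra

variable {K V}

lemma aux_iMulti_two (x y : V) : ιMulti K 2 ![x, y] = ι K x * ι K y := by
  simp [ιMulti_apply, List.ofFn_succ]

lemma aux_iMulti_three (x y z : V) : ιMulti K 3 ![x, y, z] = ι K x * (ι K y * ι K z) := by
  simp [ιMulti_apply, List.ofFn_succ, mul_assoc]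

lemma aux_anticomm (x y : V) : ι K y * ι K x = - (ι K x * ι K y) := by
  have h := ExteriorAlgebra.ι_sq_zero (R := K) (x + y)
  have hx := ExteriorAlgebra.ι_sq_zero (R := K) x
  have hy := ExteriorAlgebra.ι_sq_zero (R := K) y
  rw [map_add, add_mul, mul_add, mul_add, hx, hy, zero_add, add_zero] at h
  rw [eq_neg_iff_add_eq_zero, add_comm]
  exact h

lemma aux_wval (w : V →ₗ[K] ↥(⋀[K]^2 V) →ₗ[K] ↥(⋀[K]^3 V))
    (hw : ∀ p q r : V, w p (wedge2 K V q r) = wedge3 K V p q r) (p : V) (t : ⋀[K]^2 V) :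
    ((w p t : ⋀[K]^3 V) : ExteriorAlgebra K V) = ι K p * (t : ExteriorAlgebra K V) := by
  obtain ⟨x, hx⟩ := t
  have hx' : x ∈ Submodule.span K (Set.range (ιMulti K 2 (M := V))) := by
    rw [ιMulti_span_fixedDegree]; exact hx
  induction hx' using Submodule.span_induction with
  | mem z hz =>
      obtain ⟨v, rfl⟩ := hz
      have hv : v = ![v 0, v 1] := by
        funext i; fin_cases i <;> rfl
      have : (⟨ιMulti K 2 v, hx⟩ : ⋀[K]^2 V) = wedge2 K V (v 0) (v 1) := by
        apply Subtype.ext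
        show ιMulti K 2 v = ιMulti K 2 ![v 0, v 1]
        rw [← hv]
      rw [this, hw]
      show ιMulti K 3 ![p, v 0, v 1] = (ι K) p * ιMulti K 2 ![v 0, v 1]
      rw [aux_iMulti_three, aux_iMulti_two]
  | zero =>
      have : (⟨0, hx⟩ : ⋀[K]^2 V) = 0 := rfl
      rw [this, map_zero]
      simp
  | add y z hy hz ihy ihz =>
      have hym : y ∈ ⋀[K]^2 V := by rw [← ιMulti_span_fixedDegree]; exact hy
      have hzm : z ∈ ⋀[K]^2 V := by rw [← ιMulti_span_fixedDegree]; exact hz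
      have : (⟨y + z, hx⟩ : ⋀[K]^2 V) = ⟨y, hym⟩ + ⟨z, hzm⟩ := rfl
      rw [this, map_add]
      push_cast [ihy hym, ihz hzm]
      rw [mul_add]
  | smul c y hy ihy =>
      have hym : y ∈ ⋀[K]^2 V := by rw [← ιMulti_span_fixedDegree]; exact hy
      have : (⟨c • y, hx⟩ : ⋀[K]^2 V) = c • ⟨y, hym⟩ := rfl
      rw [this, map_smul]
      push_cast [ihy hym]
      rw [mul_smul_comm]

lemma aux_exists_basis_head (hV : Module.finrank K V = 4) (p : V) (hp : p ≠ 0) :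
    ∃ e : Module.Basis (Fin 4) K V, e 0 = p := by
  have : FiniteDimensional K V := Module.finite_of_finrank_pos (by omega)
  have hli : LinearIndepOn K id ({p} : Set V) :=
    LinearIndepOn.singleton hp
  let b := Module.Basis.extend hli
  have hmem : p ∈ hli.extend (Set.subset_univ _) :=
    hli.subset_extend _ rfl
  haveI : DecidableEq ↑(hli.extend (Set.subset_univ ({p} : Set V))) := Classical.decEq _
  haveI : Fintype (hli.extend (Set.subset_univ ({p} : Set V))) :=
    FiniteDimensional.fintypeBasisIndex b
  have hcard : Fintype.card (hli.extend (Set.subset_univ ({p} : Set V))) = 4 := by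
    rw [← Module.finrank_eq_card_basis b, hV]
  let f : Fin 4 ≃ _ := (Fintype.equivFinOfCardEq hcard).symm
  let pp : hli.extend (Set.subset_univ ({p} : Set V)) := ⟨p, hmem⟩
  let g := f.trans (Equiv.swap (f 0) pp)
  refine ⟨b.reindex g.symm, ?_⟩
  rw [Module.Basis.reindex_apply, Equiv.symm_symm]
  show b (Equiv.swap (f 0) pp (f 0)) = p
  rw [Equiv.swap_apply_left]
  exact Module.Basis.extend_apply_self hli pp

lemma aux_mem_span_pairs (e : Module.Basis (Fin 4) K V) (x : ExteriorAlgebra K V)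
    (hx : x ∈ ⋀[K]^2 V) :
    ∃ a : Fin 4 × Fin 4 → K,
      ∑ ij : Fin 4 × Fin 4, a ij • (ι K (e ij.1) * ι K (e ij.2)) = x := by
  rw [← Submodule.mem_span_range_iff_exists_fun K]
  rw [← ιMulti_span_fixedDegree] at hx
  refine Submodule.span_le.mpr ?_ hx
  rintro z ⟨v, rfl⟩
  have hv := aux_iMulti_two (K := K) (v 0) (v 1)
  rw [show ![v 0, v 1] = v from by funext i; fin_cases i <;> simp] at hv
  rw [SetLike.mem_coe, hv]
  rw [← e.sum_repr (v 0), ← e.sum_repr (v 1), map_sum, map_sum, Finset.sum_mul]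
  refine Submodule.sum_mem _ fun i _ => ?_
  rw [Finset.mul_sum]
  refine Submodule.sum_mem _ fun j _ => ?_
  rw [map_smul, map_smul, smul_mul_assoc, mul_smul_comm, smul_smul]
  exact Submodule.smul_mem _ _ (Submodule.subset_span ⟨(i, j), rfl⟩)

noncomputable def contraDet (e : Module.Basis (Fin 4) K V) (k : Fin 4) :
    ExteriorAlgebra K V →ₗ[K] K :=
  liftAlternating (Pi.single 3 ((e.det).curryLeft (e k)))

lemma contraDet_apply (e : Module.Basis (Fin 4) K V) (k : Fin 4) (x y z : V) :
    contraDet e k (ι K x * (ι K y * ι K z)) = e.det ![e k, x, y, z] := by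
  rw [← aux_iMulti_three, contraDet, liftAlternating_apply_ιMulti]
  rw [Pi.single_eq_same]
  rfl

lemma aux_det_pattern (e : Module.Basis (Fin 4) K V) (k i j : Fin 4) :
    e.det ![e k, e 0, e i, e j] =
      Matrix.det (Matrix.of fun r c => if (![k, 0, i, j] c = r) then (1 : K) else 0) := by
  rw [show (![e k, e 0, e i, e j]) = (fun l => e (![k, 0, i, j] l)) from by
    funext l; fin_cases l <;> simp, Module.Basis.det_apply]
  congr 1
  ext r c
  simp [Module.Basis.toMatrix_apply, Finsupp.single_apply]

set_option maxHeartbeats 3000000 in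
lemma aux_forward (hV : Module.finrank K V = 4) (p : V) (t : ⋀[K]^2 V) (hp : p ≠ 0)
    (h : ι K p * (t : ExteriorAlgebra K V) = 0) :
    ∃ q r : V, t = wedge2 K V q r ∧ p ∈ Submodule.span K {q, r} := by
  obtain ⟨e, he⟩ := aux_exists_basis_head hV p hp
  obtain ⟨a, ha⟩ := aux_mem_span_pairs e (t : ExteriorAlgebra K V) t.2
  have key : ∀ k : Fin 4,
      ∑ ij : Fin 4 × Fin 4, a ij • (e.det ![e k, e 0, e ij.1, e ij.2]) = 0 := by
    intro k
    have h0 : (∑ ij : Fin 4 × Fin 4,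
        a ij • (ι K (e 0) * (ι K (e ij.1) * ι K (e ij.2)))) = 0 := by
      have hdist : ι K (e 0) * (∑ ij : Fin 4 × Fin 4,
          a ij • (ι K (e ij.1) * ι K (e ij.2))) = ∑ ij : Fin 4 × Fin 4,
          a ij • (ι K (e 0) * (ι K (e ij.1) * ι K (e ij.2))) := by
        rw [Finset.mul_sum]
        exact Finset.sum_congr rfl fun ij _ => mul_smul_comm _ _ _
      rw [← hdist, ha, he, h]
    have h1 := congrArg (contraDet e k) h0
    rw [map_sum (contraDet e k)] at h1
    simpa only [map_zero, map_smul, contraDet_apply, smul_eq_mul] using h1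
  have h12 : a (1, 2) = a (2, 1) := by
    have hk := key 3
    rw [Fintype.sum_prod_type] at hk
    simp only [Fin.sum_univ_four, aux_det_pattern] at hk
    simp (config := { decide := true })
      [Matrix.det_succ_row_zero, Fin.sum_univ_succ, Fin.succAbove] at hk
    linear_combination -hk
  have h13 : a (1, 3) = a (3, 1) := by
    have hk := key 2
    rw [Fintype.sum_prod_type] at hk
    simp only [Fin.sum_univ_four, aux_det_pattern] at hk
    simp (config := { decide := true })
      [Matrix.det_succ_row_zero, Fin.sum_univ_succ, Fin.succAbove] at hk
    linear_combination hk
  have h23 : a (2, 3) = a (3, 2) := by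
    have hk := key 1
    rw [Fintype.sum_prod_type] at hk
    simp only [Fin.sum_univ_four, aux_det_pattern] at hk
    simp (config := { decide := true })
      [Matrix.det_succ_row_zero, Fin.sum_univ_succ, Fin.succAbove] at hk
    linear_combination -hk
  set v' : V := (a (0, 1) - a (1, 0)) • e 1 +
    ((a (0, 2) - a (2, 0)) • e 2 + (a (0, 3) - a (3, 0)) • e 3) with hv'
  refine ⟨p, v', ?_, Submodule.subset_span (Set.mem_insert _ _)⟩
  apply Subtype.ext
  show (t : ExteriorAlgebra K V) = ιMulti K 2 ![p, v']
  rw [aux_iMulti_two, ← ha, ← he, hv']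
  rw [Fintype.sum_prod_type]
  simp only [Fin.sum_univ_four]
  rw [← h12, ← h13, ← h23]
  rw [aux_anticomm (e 0) (e 1), aux_anticomm (e 0) (e 2), aux_anticomm (e 0) (e 3),
    aux_anticomm (e 1) (e 2), aux_anticomm (e 1) (e 3), aux_anticomm (e 2) (e 3)]
  simp only [map_add, map_smul, mul_add, mul_smul_comm, ExteriorAlgebra.ι_sq_zero,
    smul_zero, add_zero, zero_add, smul_neg]
  module

lemma aux_backward (p q r : V) (hpqr : p ∈ Submodule.span K {q, r}) :
    wedge3 K V p q r = 0 := by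
  obtain ⟨c, d, hcd⟩ := Submodule.mem_span_pair.mp hpqr
  apply Subtype.ext
  show ιMulti K 3 ![p, q, r] = 0
  rw [← hcd]
  have h1 : (![c • q + d • r, q, r] : Fin 3 → V) = Fin.cons (c • q + d • r) ![q, r] := rfl
  rw [h1]
  have hadd := MultilinearMap.cons_add
    ((ιMulti K 3 (M := V)).toMultilinearMap) ![q, r] (c • q) (d • r)
  simp only [AlternatingMap.coe_multilinearMap] at hadd
  rw [hadd]
  have hc := MultilinearMap.cons_smul ((ιMulti K 3 (M := V)).toMultilinearMap) ![q, r] c q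
  have hd := MultilinearMap.cons_smul ((ιMulti K 3 (M := V)).toMultilinearMap) ![q, r] d r
  simp only [AlternatingMap.coe_multilinearMap] at hc hd
  rw [hc, hd]
  have hq : ιMulti K 3 (Fin.cons q ![q, r]) = 0 :=
    AlternatingMap.map_eq_zero_of_eq _ _ (i := 0) (j := 1) rfl (by decide)
  have hr : ιMulti K 3 (Fin.cons r ![q, r]) = 0 :=
    AlternatingMap.map_eq_zero_of_eq _ _ (i := 0) (j := 2) rfl (by decide)
  rw [hq, hr, smul_zero, smul_zero, add_zero]

end Aux

/-- For nonzero `p ∈ V` and `t ∈ Λ²V` one has `p ∧ t = 0` if and only if `t` is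
decomposable, `t = q ∧ r`, with `p` contained in the span of `q` and `r`. Here the wedge
`V × Λ²V → Λ³V` is given as a bilinear map `w` with `w p (q ∧ r) = p ∧ q ∧ r`. -/
theorem wedge_with_vector_eq_zero_iff
    (hV : Module.finrank K V = 4)
    (w : V →ₗ[K] ↥(⋀[K]^2 V) →ₗ[K] ↥(⋀[K]^3 V))
    (hw : ∀ p q r : V, w p (wedge2 K V q r) = wedge3 K V p q r)
    (p : V) (t : ⋀[K]^2 V) (hp : p ≠ 0) (ht : t ≠ 0) :
    w p t = 0 ↔ ∃ q r : V, t = wedge2 K V q r ∧ p ∈ Submodule.span K {q, r} := by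
  constructor
  · intro h0
    have hval := aux_wval w hw p t
    rw [h0] at hval
    exact aux_forward hV p t hp (by simpa using hval.symm)
  · rintro ⟨q, r, rfl, hpqr⟩
    rw [hw]
    exact aux_backward p q r hpqr
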